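/- Let F be a field, U ∈ F^{n×n} an invertible upper-triangular matrix, H ∈ F^{m×n}, and R ∈ F^{m×n} the unique matrix with R·U = H. Let 𝓡 ∈ F^{m×n} be any matrix, J a subset of {1,…,n} containing ColSupport(R − 𝓡), and P ∈ F^{n×c} the selection matrix of J. Then Pᵀ·U·P is invertible and (R − 𝓡)·P = (H − 𝓡·U)·P·(Pᵀ·U·P)^{−1}. -/

import Mathlib

open Matrix

/-- The selection matrix `P ∈ F^{n×c}` of a subset `J ⊆ {1,…,n}` with `|J| = c`:
its columns are the standard basis vectors indexed by `J` in increasing order. -/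
def selectionMatrix (F : Type*) [Zero F] [One F] {n c : ℕ}
    (J : Finset (Fin n)) (hc : J.card = c) : Matrix (Fin n) (Fin c) F :=
  Matrix.of fun i k => if i = (J.orderIsoOfFin hc k : Fin n) then 1 else 0

/-- the core identity of the error-correcting TRSM algorithm: with `U`
invertible upper-triangular, `R` the (unique) solution of `R·U = H`, `𝓡` an approximate
solution, and `J ⊇ ColSupport(R − 𝓡)` with selection matrix `P`, the matrix `Pᵀ·U·P` is
invertible and `(R − 𝓡)·P = (H − 𝓡·U)·P·(Pᵀ·U·P)⁻¹`. -/
theorem trsm_error_blackbox_identity {F : Type*} [Field F] {m n c : ℕ}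
    (U : Matrix (Fin n) (Fin n) F)
    (hU : ∀ i j, j < i → U i j = 0) (hUinv : IsUnit U.det)
    (H R 𝓡 : Matrix (Fin m) (Fin n) F) (hR : R * U = H)
    (J : Finset (Fin n)) (hc : J.card = c)
    (hsupp : ∀ j : Fin n, (∃ i, (R - 𝓡) i j ≠ 0) → j ∈ J) :
    IsUnit ((selectionMatrix F J hc)ᵀ * U * selectionMatrix F J hc).det ∧
    (R - 𝓡) * selectionMatrix F J hc =
      (H - 𝓡 * U) * selectionMatrix F J hc *
        ((selectionMatrix F J hc)ᵀ * U * selectionMatrix F J hc)⁻¹ := by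
  set P := selectionMatrix F J hc with hP
  set f : Fin c → Fin n := fun k => J.orderEmbOfFin hc k with hf
  have hPentry : ∀ (i : Fin n) (k : Fin c), P i k = if i = f k then (1 : F) else 0 := by
    intro i k
    simp [hP, selectionMatrix, hf, Finset.coe_orderIsoOfFin_apply]
    congr
  have hfinj : Function.Injective f := (J.orderEmbOfFin hc).injective
  have hfmono : StrictMono f := (J.orderEmbOfFin hc).strictMono
  have hfmem : ∀ k, f k ∈ J := fun k => J.orderEmbOfFin_mem hc k
  have hfsurj : ∀ a ∈ J, ∃ k, f k = a := by
    intro a ha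
    have : a ∈ Set.range (J.orderEmbOfFin hc) := by
      rw [J.range_orderEmbOfFin hc]; exact ha
    obtain ⟨k, hk⟩ := this
    exact ⟨k, hk⟩
  -- Pᵀ U P is the submatrix of U
  have hsub : Pᵀ * U * P = U.submatrix f f := by
    ext k l
    have h1 : ∀ j, (Pᵀ * U) k j = U (f k) j := by
      intro j
      simp [Matrix.mul_apply, Matrix.transpose_apply, hPentry, ite_mul]
    rw [Matrix.mul_apply]
    simp only [h1, hPentry, mul_ite, mul_one, mul_zero, Matrix.submatrix_apply]
    rw [Finset.sum_eq_single (f l)]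
    · simp
    · intro b _ hb; simp [hb]
    · simp
  -- triangularity of the submatrix
  have htri : (U.submatrix f f).BlockTriangular id := by
    intro k l hkl
    exact hU _ _ (hfmono hkl)
  -- diagonal entries of U are nonzero
  have hdiag : ∀ i, U i i ≠ 0 := by
    have hdetU : U.det = ∏ i, U i i := Matrix.det_of_upperTriangular (fun i j h => hU i j h)
    have : U.det ≠ 0 := hUinv.ne_zero
    rw [hdetU] at this
    intro i
    exact Finset.prod_ne_zero_iff.mp this i (Finset.mem_univ i)
  have hdetA : ((Pᵀ * U * P).det : F) ≠ 0 := by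
    rw [hsub, Matrix.det_of_upperTriangular htri]
    exact Finset.prod_ne_zero_iff.mpr fun k _ => hdiag (f k)
  have hAunit : IsUnit (Pᵀ * U * P).det := isUnit_iff_ne_zero.mpr hdetA
  refine ⟨hAunit, ?_⟩
  have : Invertible (Pᵀ * U * P) := (Pᵀ * U * P).invertibleOfIsUnitDet hAunit
  set E := R - 𝓡 with hE
  -- entries of P * Pᵀ
  have hPPt : ∀ a b : Fin n, (P * Pᵀ) a b = if a = b ∧ a ∈ J then (1 : F) else 0 := by
    intro a b
    rw [Matrix.mul_apply]
    simp only [Matrix.transpose_apply, hPentry, ite_mul, one_mul, zero_mul]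
    by_cases hab : a = b
    · subst hab
      by_cases haJ : a ∈ J
      · obtain ⟨k, hk⟩ := hfsurj a haJ
        rw [Finset.sum_eq_single k]
        · simp [hk, haJ]
        · intro b _ hb
          have : a ≠ f b := fun h => hb (hfinj (hk.trans h)).symm
          simp [this]
        · simp
      · rw [Finset.sum_eq_zero]
        · simp [haJ]
        intro k _
        have : a ≠ f k := fun h => haJ (h ▸ hfmem k)
        simp [this]
    · rw [Finset.sum_eq_zero]
      · simp [hab]
      intro k _
      by_cases h1 : a = f k
      · have h2 : b ≠ f k := fun h => hab (h1.trans h.symm)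
        simp [h1, h2]
      · simp [h1]
  -- E * (P * Pᵀ) = E since columns of E outside J vanish
  have hEPPt : E * (P * Pᵀ) = E := by
    ext i j
    rw [Matrix.mul_apply]
    by_cases hjJ : j ∈ J
    · rw [Finset.sum_eq_single j]
      · simp [hPPt, hjJ]
      · intro b _ hb
        simp [hPPt, hb]
      · simp
    · have hEj : E i j = 0 := by
        by_contra h
        exact hjJ (hsupp j ⟨i, h⟩)
      rw [hEj, Finset.sum_eq_zero]
      intro b _
      by_cases hbj : b = j
      · subst hbj
        simp [hPPt, hjJ]
      · simp [hPPt, hbj]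
  have key : E * P * (Pᵀ * U * P) = (H - 𝓡 * U) * P := by
    have hHU : H - 𝓡 * U = E * U := by rw [hE, Matrix.sub_mul, hR]
    rw [hHU]
    calc E * P * (Pᵀ * U * P) = E * (P * Pᵀ) * U * P := by
          simp only [Matrix.mul_assoc]
      _ = E * U * P := by rw [hEPPt]
  calc E * P = E * P * (Pᵀ * U * P) * (Pᵀ * U * P)⁻¹ := by
        rw [Matrix.mul_inv_cancel_right_of_invertible]
    _ = (H - 𝓡 * U) * P * (Pᵀ * U * P)⁻¹ := by rw [key]
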